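/- The function E(α, β) = Λ(α) + Λ(β) + Λ(π − α − β) is strictly concave on the open convex domain D = {(α, β) : α > 0, β > 0, α + β < π}. -/

import Mathlib

open Real MeasureTheory intervalIntegral Matrix

/-- The Lobachevsky function. -/
noncomputable def lob (x : ℝ) : ℝ := -∫ t in (0:ℝ)..x, Real.log |2 * Real.sin t|

/-- The hyperbolic volume energy of a Euclidean triangle with angles a, b, π - a - b. -/
noncomputable def Etri (a b : ℝ) : ℝ := lob a + lob b + lob (Real.pi - a - b)

open Set


lemma intInt_log (m : ℝ) (hm : 0 < m) :
    IntegrableOn Real.log (Set.Ioc 0 m) := by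
  have h1 : IntegrableOn (fun t => -Real.log t) (Set.Ioc 0 (min m 1)) := by
    apply intervalIntegral.integrableOn_deriv_of_nonneg
      (g := fun t => t - t * Real.log t)
    · exact (continuous_id.sub Real.continuous_mul_log).continuousOn
    · intro x hx
      have hx0 : x ≠ 0 := ne_of_gt hx.1
      have h : HasDerivAt (fun t => t * Real.log t) (Real.log x + 1) x := by
        have := (hasDerivAt_id x).mul (Real.hasDerivAt_log hx0)
        simp only [id_eq, one_mul] at this
        refine this.congr_deriv ?_
        simp [hx0]
      exact ((hasDerivAt_id' x).sub h).congr_deriv (by ring)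
    · intro x hx
      have : x ≤ 1 := le_of_lt (lt_of_lt_of_le hx.2 (min_le_right m 1))
      have := Real.log_nonpos (le_of_lt hx.1) this
      linarith
  have h2 : IntegrableOn Real.log (Set.Ioc 0 (min m 1)) := by
    have : (Real.log : ℝ → ℝ) = -(fun t => -Real.log t) := by funext t; simp
    rw [this]
    exact h1.neg
  rcases le_or_gt m 1 with h | h
  · simpa [min_eq_left h] using h2
  · have hcont : ContinuousOn Real.log (Set.Icc 1 m) := by
      apply Real.continuousOn_log.mono
      intro x hx
      simp only [Set.mem_Icc] at hx
      simp only [Set.mem_compl_iff, Set.mem_singleton_iff]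
      intro h0; rw [h0] at hx; linarith [hx.1]
    have h3 : IntegrableOn Real.log (Set.Ioc 1 m) :=
      (hcont.integrableOn_compact isCompact_Icc).mono_set Set.Ioc_subset_Icc_self
    have heq : Set.Ioc (0:ℝ) m = Set.Ioc 0 1 ∪ Set.Ioc 1 m :=
      (Set.Ioc_union_Ioc_eq_Ioc zero_le_one h.le).symm
    rw [heq]
    have h2' : IntegrableOn Real.log (Set.Ioc 0 1) := by
      simpa [min_eq_right h.le] using h2
    exact h2'.union h3

lemma intInt_logsin {x : ℝ} (hx0 : 0 < x) (hxpi : x < Real.pi) :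
    IntervalIntegrable (fun t => Real.log |2 * Real.sin t|) volume 0 x := by
  have hmeas : Measurable (fun t : ℝ => Real.log |2 * Real.sin t|) :=
    Real.measurable_log.comp ((continuous_abs.comp
      (continuous_const.mul Real.continuous_sin)).measurable)
  rw [intervalIntegrable_iff_integrableOn_Ioc_of_le hx0.le]
  set m := min x (Real.pi / 2) with hm
  have hm0 : 0 < m := lt_min hx0 (by positivity)
  have hmx : m ≤ x := min_le_left _ _
  have hpart1 : IntegrableOn (fun t => Real.log |2 * Real.sin t|) (Set.Ioc 0 m) := by
    have hdom : IntegrableOn (fun t => |Real.log t| + Real.log 2) (Set.Ioc 0 m) :=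
      (intInt_log m hm0).abs.add (integrableOn_const (by simp [Real.volume_Ioc]))
    apply Integrable.mono hdom hmeas.aestronglyMeasurable
    rw [ae_restrict_iff' measurableSet_Ioc]
    filter_upwards with t ht
    have ht1 : 0 < t := ht.1
    have ht2 : t ≤ Real.pi / 2 := le_trans ht.2 (min_le_right _ _)
    have hs1 : Real.sin t ≤ t := Real.sin_le ht1.le
    have hs2 : 2 / Real.pi * t ≤ Real.sin t := Real.mul_le_sin ht1.le ht2
    have hpi4 : Real.pi ≤ 4 := by linarith [Real.pi_le_four]
    have hpipos := Real.pi_pos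
    have hlow : t ≤ 2 * Real.sin t := by
      rw [div_mul_eq_mul_div, div_le_iff₀ hpipos] at hs2
      nlinarith
    have hsinpos : 0 < Real.sin t := by nlinarith
    have habs : |2 * Real.sin t| = 2 * Real.sin t := abs_of_pos (by linarith)
    rw [Real.norm_eq_abs, Real.norm_eq_abs, habs]
    have hub : Real.log (2 * Real.sin t) ≤ Real.log 2 + Real.log t := by
      rw [← Real.log_mul (by norm_num) ht1.ne']
      exact Real.log_le_log (by positivity) (by nlinarith)
    have hlb : Real.log t ≤ Real.log (2 * Real.sin t) :=
      Real.log_le_log ht1 hlow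
    have h2 : (0:ℝ) ≤ Real.log 2 := Real.log_nonneg one_le_two
    rw [abs_of_nonneg (by positivity : (0:ℝ) ≤ |Real.log t| + Real.log 2)]
    rw [abs_le]
    constructor
    · linarith [neg_abs_le (Real.log t)]
    · linarith [le_abs_self (Real.log t)]
  have hpart2 : IntegrableOn (fun t => Real.log |2 * Real.sin t|) (Set.Ioc m x) := by
    have hcont : ContinuousOn (fun t => Real.log |2 * Real.sin t|) (Set.Icc m x) := by
      apply ContinuousOn.log
      · exact (continuous_abs.comp (continuous_const.mul Real.continuous_sin)).continuousOn
      · intro t ht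
        simp only [Set.mem_Icc] at ht
        have : 0 < Real.sin t := Real.sin_pos_of_pos_of_lt_pi
          (lt_of_lt_of_le hm0 ht.1) (lt_of_le_of_lt ht.2 hxpi)
        simp only [abs_ne_zero]
        positivity
    exact (hcont.integrableOn_compact isCompact_Icc).mono_set Set.Ioc_subset_Icc_self
  have heq : Set.Ioc (0:ℝ) x = Set.Ioc 0 m ∪ Set.Ioc m x :=
    (Set.Ioc_union_Ioc_eq_Ioc hm0.le hmx).symm
  rw [heq]
  exact hpart1.union hpart2


lemma lob_hasDerivAt {x : ℝ} (h0 : 0 < x) (hp : x < Real.pi) :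
    HasDerivAt lob (-Real.log (2 * Real.sin x)) x := by
  have hsin : 0 < Real.sin x := Real.sin_pos_of_pos_of_lt_pi h0 hp
  have hint := intInt_logsin h0 hp
  have hmeas : Measurable (fun t : ℝ => Real.log |2 * Real.sin t|) :=
    Real.measurable_log.comp ((continuous_abs.comp
      (continuous_const.mul Real.continuous_sin)).measurable)
  have hmf : StronglyMeasurableAtFilter (fun t : ℝ => Real.log |2 * Real.sin t|)
      (nhds x) volume :=
    ⟨Set.univ, Filter.univ_mem, (hmeas.aestronglyMeasurable).restrict⟩
  have hc : ContinuousAt (fun t : ℝ => Real.log |2 * Real.sin t|) x := by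
    apply ContinuousAt.log
    · exact (continuous_abs.comp (continuous_const.mul Real.continuous_sin)).continuousAt
    · simp only [abs_ne_zero]; positivity
  have h := (intervalIntegral.integral_hasDerivAt_right hint hmf hc).neg
  have habs : |2 * Real.sin x| = 2 * Real.sin x := abs_of_pos (by linarith)
  rw [habs] at h
  exact h

lemma negloge_hasDerivAt {x : ℝ} (h0 : 0 < x) (hp : x < Real.pi) :
    HasDerivAt (fun y => -Real.log (2 * Real.sin y)) (-(Real.cos x / Real.sin x)) x := by
  have hsin : 0 < Real.sin x := Real.sin_pos_of_pos_of_lt_pi h0 hp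
  have h : HasDerivAt (fun y => 2 * Real.sin y) (2 * Real.cos x) x :=
    (Real.hasDerivAt_sin x).const_mul 2
  have h2 := (h.log (by positivity)).neg
  refine h2.congr_deriv ?_
  rw [mul_div_mul_left _ _ two_ne_zero]

lemma quad_pos {x y z u v : ℝ} (h1 : x * y + y * z + z * x = 1) (hxz : 0 < x + z)
    (huv : u ≠ 0 ∨ v ≠ 0) : 0 < u ^ 2 * x + v ^ 2 * y + (u + v) ^ 2 * z := by
  have key : (x + z) * (u ^ 2 * x + v ^ 2 * y + (u + v) ^ 2 * z)
      = ((x + z) * u + z * v) ^ 2 + v ^ 2 * (x * y + y * z + z * x) := by ring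
  rw [h1, mul_one] at key
  have hpos : 0 < ((x + z) * u + z * v) ^ 2 + v ^ 2 := by
    rcases eq_or_ne v 0 with rfl | hv
    · have hu : u ≠ 0 := by tauto
      have : (x + z) * u ≠ 0 := mul_ne_zero hxz.ne' hu
      have h3 : (x + z) * u + z * 0 ≠ 0 := by simpa using this
      positivity
    · positivity
  by_contra h
  push_neg at h
  nlinarith [mul_nonpos_of_nonneg_of_nonpos hxz.le h]

lemma key_pos {A B u v : ℝ} (hA : 0 < A) (hB : 0 < B) (hAB : A + B < Real.pi)
    (huv : u ≠ 0 ∨ v ≠ 0) :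
    0 < u ^ 2 * (Real.cos A / Real.sin A) + v ^ 2 * (Real.cos B / Real.sin B)
      + (u + v) ^ 2 * (Real.cos (Real.pi - A - B) / Real.sin (Real.pi - A - B)) := by
  set C := Real.pi - A - B with hC
  have hsa : 0 < Real.sin A := Real.sin_pos_of_pos_of_lt_pi hA (by linarith)
  have hsb : 0 < Real.sin B := Real.sin_pos_of_pos_of_lt_pi hB (by linarith)
  have hsc : 0 < Real.sin C := Real.sin_pos_of_pos_of_lt_pi (by rw [hC]; linarith)
    (by rw [hC]; linarith)
  have hsinC : Real.sin C = Real.sin A * Real.cos B + Real.cos A * Real.sin B := by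
    rw [show C = Real.pi - (A + B) by rw [hC]; ring, Real.sin_pi_sub, Real.sin_add]
  have hcosC : Real.cos C = -(Real.cos A * Real.cos B - Real.sin A * Real.sin B) := by
    rw [show C = Real.pi - (A + B) by rw [hC]; ring, Real.cos_pi_sub, Real.cos_add]
  apply quad_pos _ _ huv
  · field_simp
    rw [hsinC, hcosC]
    ring
  · have heq : Real.cos A / Real.sin A + Real.cos C / Real.sin C
        = Real.sin B / (Real.sin A * Real.sin C) := by
      field_simp
      rw [hsinC, hcosC]
      linear_combination Real.sin B * (Real.sin_sq_add_cos_sq A)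
    rw [heq]
    positivity


theorem Etri_strictConcave :
    StrictConcaveOn ℝ {p : ℝ × ℝ | 0 < p.1 ∧ 0 < p.2 ∧ p.1 + p.2 < Real.pi}
      (fun p => Etri p.1 p.2) := by
  set D := {p : ℝ × ℝ | 0 < p.1 ∧ 0 < p.2 ∧ p.1 + p.2 < Real.pi} with hD
  have hconv : Convex ℝ D := by
    intro p hp q hq a b ha hb hab
    simp only [hD, Set.mem_setOf_eq, Prod.fst_add, Prod.snd_add, Prod.smul_fst,
      Prod.smul_snd, smul_eq_mul] at hp hq ⊢
    refine ⟨?_, ?_, ?_⟩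
    · rcases eq_or_lt_of_le ha with rfl | ha'
      · simpa [show b = 1 by linarith] using hq.1
      · nlinarith [hq.1, hp.1, mul_nonneg hb hq.1.le]
    · rcases eq_or_lt_of_le ha with rfl | ha'
      · simpa [show b = 1 by linarith] using hq.2.1
      · nlinarith [hq.2.1, hp.2.1, mul_nonneg hb hq.2.1.le]
    · rcases eq_or_lt_of_le ha with rfl | ha'
      · have hb1 : b = 1 := by linarith
        simp only [hb1, zero_mul, one_mul, zero_add]
        linarith [hq.2.2]
      · nlinarith [mul_lt_mul_of_pos_left hp.2.2 ha',
          mul_le_mul_of_nonneg_left hq.2.2.le hb]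
  constructor
  · exact hconv
  intro p hp q hq hpq a b ha hb hab
  set u := q.1 - p.1 with hu
  set v := q.2 - p.2 with hv
  have huv : u ≠ 0 ∨ v ≠ 0 := by
    by_contra h
    push_neg at h
    apply hpq
    have h1 : p.1 = q.1 := by have := h.1; simp [hu] at this; linarith
    have h2 : p.2 = q.2 := by have := h.2; simp [hv] at this; linarith
    exact Prod.ext h1 h2
  set g : ℝ → ℝ := fun s => Etri (p.1 + s * u) (p.2 + s * v) with hg
  -- the set of good parameters
  have hmemD : ∀ s ∈ Set.Icc (0:ℝ) 1, (p.1 + s * u > 0 ∧ p.2 + s * v > 0 ∧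
      (p.1 + s * u) + (p.2 + s * v) < Real.pi) := by
    intro s hs
    have := hconv hp hq (by linarith [hs.2] : (0:ℝ) ≤ 1 - s) hs.1 (by ring)
    simp only [hD, Set.mem_setOf_eq, Prod.smul_fst, Prod.smul_snd, Prod.fst_add,
      Prod.snd_add, smul_eq_mul] at this
    have e1 : p.1 + s * u = (1 - s) * p.1 + s * q.1 := by rw [hu]; ring
    have e2 : p.2 + s * v = (1 - s) * p.2 + s * q.2 := by rw [hv]; ring
    exact ⟨by rw [e1]; exact this.1, by rw [e2]; exact this.2.1,
      by rw [e1, e2]; exact this.2.2⟩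
  set P : Set ℝ := {s | 0 < p.1 + s * u ∧ 0 < p.2 + s * v ∧
    p.1 + s * u + (p.2 + s * v) < Real.pi} with hP
  have hPopen : IsOpen P := by
    rw [hP]
    have c1 : Continuous fun s : ℝ => p.1 + s * u :=
      continuous_const.add (continuous_id.mul continuous_const)
    have c2 : Continuous fun s : ℝ => p.2 + s * v :=
      continuous_const.add (continuous_id.mul continuous_const)
    have : {s : ℝ | 0 < p.1 + s * u ∧ 0 < p.2 + s * v ∧
        p.1 + s * u + (p.2 + s * v) < Real.pi}
        = {s : ℝ | 0 < p.1 + s * u} ∩ ({s : ℝ | 0 < p.2 + s * v} ∩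
          {s : ℝ | p.1 + s * u + (p.2 + s * v) < Real.pi}) := by
      ext s; simp [Set.mem_inter_iff, and_assoc]
    rw [this]
    exact (isOpen_lt continuous_const c1).inter
      ((isOpen_lt continuous_const c2).inter (isOpen_lt (c1.add c2) continuous_const))
  have hIccP : ∀ s ∈ Set.Icc (0:ℝ) 1, s ∈ P := fun s hs => hmemD s hs
  -- first derivative
  set g1 : ℝ → ℝ := fun s =>
    -Real.log (2 * Real.sin (p.1 + s * u)) * u
    + -Real.log (2 * Real.sin (p.2 + s * v)) * v
    + -Real.log (2 * Real.sin (Real.pi - (p.1 + s * u) - (p.2 + s * v))) * (0 - u - v)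
    with hg1
  have hAd : ∀ s : ℝ, HasDerivAt (fun s => p.1 + s * u) u s := fun s => by
    simpa using ((hasDerivAt_id s).mul_const u).const_add p.1
  have hBd : ∀ s : ℝ, HasDerivAt (fun s => p.2 + s * v) v s := fun s => by
    simpa using ((hasDerivAt_id s).mul_const v).const_add p.2
  have hCd : ∀ s : ℝ, HasDerivAt
      (fun s => Real.pi - (p.1 + s * u) - (p.2 + s * v)) (0 - u - v) s := fun s =>
    ((hasDerivAt_const s Real.pi).sub (hAd s)).sub (hBd s)
  have hang : ∀ s ∈ P, 0 < p.1 + s * u ∧ p.1 + s * u < Real.pi ∧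
      0 < p.2 + s * v ∧ p.2 + s * v < Real.pi ∧
      0 < Real.pi - (p.1 + s * u) - (p.2 + s * v) ∧
      Real.pi - (p.1 + s * u) - (p.2 + s * v) < Real.pi := by
    intro s hs
    rw [hP, Set.mem_setOf_eq] at hs
    exact ⟨hs.1, by linarith [hs.2.1, hs.2.2], hs.2.1, by linarith [hs.1, hs.2.2],
      by linarith [hs.2.2], by linarith [hs.1, hs.2.1]⟩
  have hgd : ∀ s ∈ P, HasDerivAt g (g1 s) s := by
    intro s hs
    obtain ⟨h1, h2, h3, h4, h5, h6⟩ := hang s hs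
    have d1 := (lob_hasDerivAt h1 h2).comp s (hAd s)
    have d2 := (lob_hasDerivAt h3 h4).comp s (hBd s)
    have d3 := (lob_hasDerivAt h5 h6).comp s (hCd s)
    exact (d1.add d2).add d3
  have hg1d : ∀ s ∈ P, HasDerivAt g1
      ((-(Real.cos (p.1 + s * u) / Real.sin (p.1 + s * u)) * u) * u
      + (-(Real.cos (p.2 + s * v) / Real.sin (p.2 + s * v)) * v) * v
      + (-(Real.cos (Real.pi - (p.1 + s * u) - (p.2 + s * v)) /
            Real.sin (Real.pi - (p.1 + s * u) - (p.2 + s * v))) * (0 - u - v)) * (0 - u - v)) s := by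
    intro s hs
    obtain ⟨h1, h2, h3, h4, h5, h6⟩ := hang s hs
    have d1 := ((negloge_hasDerivAt h1 h2).comp s (hAd s)).mul_const u
    have d2 := ((negloge_hasDerivAt h3 h4).comp s (hBd s)).mul_const v
    have d3 := ((negloge_hasDerivAt h5 h6).comp s (hCd s)).mul_const (0 - u - v)
    exact (d1.add d2).add d3
  have hsc : StrictConcaveOn ℝ (Set.Icc (0:ℝ) 1) g := by
    apply strictConcaveOn_of_deriv2_neg (convex_Icc 0 1)
    · intro s hs
      exact (hgd s (hIccP s hs)).continuousAt.continuousWithinAt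
    · intro s hs
      rw [interior_Icc] at hs
      have hsP : s ∈ P := hIccP s (Set.Ioo_subset_Icc_self hs)
      have hev : deriv g =ᶠ[nhds s] g1 := by
        filter_upwards [hPopen.mem_nhds hsP] with t ht
        exact (hgd t ht).deriv
      show deriv (deriv g) s < 0
      rw [hev.deriv_eq, (hg1d s hsP).deriv]
      obtain ⟨h1, h2, h3, h4, h5, h6⟩ := hang s hsP
      have hABpi : (p.1 + s * u) + (p.2 + s * v) < Real.pi := by linarith
      have hk := key_pos h1 h3 hABpi huv
      have hCeq : Real.pi - (p.1 + s * u) - (p.2 + s * v)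
          = Real.pi - (p.1 + s * u) - (p.2 + s * v) := rfl
      nlinarith [hk]
  have h01 : (0:ℝ) ∈ Set.Icc (0:ℝ) 1 := by norm_num
  have h11 : (1:ℝ) ∈ Set.Icc (0:ℝ) 1 := by norm_num
  have hlt := hsc.2 h01 h11 (by norm_num) ha hb hab
  simp only [smul_eq_mul, mul_zero, mul_one, zero_add] at hlt
  have eg0 : g 0 = Etri p.1 p.2 := by
    simp only [hg, zero_mul, add_zero]
  have eg1 : g b = Etri ((a • p + b • q).1) ((a • p + b • q).2) := by
    have e1 : p.1 + b * u = (a • p + b • q).1 := by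
      simp only [Prod.fst_add, Prod.smul_fst, smul_eq_mul, hu]
      linear_combination (-p.1) * hab
    have e2 : p.2 + b * v = (a • p + b • q).2 := by
      simp only [Prod.snd_add, Prod.smul_snd, smul_eq_mul, hv]
      linear_combination (-p.2) * hab
    simp only [hg, e1, e2]
  have eg2 : g 1 = Etri q.1 q.2 := by
    have e1 : p.1 + 1 * u = q.1 := by rw [hu]; ring
    have e2 : p.2 + 1 * v = q.2 := by rw [hv]; ring
    simp only [hg, e1, e2]
  rw [eg0, eg1, eg2] at hlt
  simpa using hlt
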